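/- Let ψ be a complex number, j = diag(−1, 1), R = (1/2)·[[2 − |ψ|², −(ψ̄)²],[ψ², 2 + |ψ|²]], and let F₁ = [ψ, ψ̄] be the 1×2 row matrix. Then R − R⁻¹ = j·F₁*·F₁, where R⁻¹ = 2I − R. -/
import Mathlib


open Matrix Complex

/-- For `ψ ∈ ℂ`, `j = diag(−1,1)`,
`R = (1/2)·[[2 − |ψ|², −ψ̄²],[ψ², 2 + |ψ|²]]` and `F₁ = [ψ, ψ̄]`, one has
`R − R⁻¹ = j·F₁ᴴ·F₁`, where `R⁻¹ = 2I − R`. -/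
theorem stmt_16 (ψ : ℂ)
    (j R : Matrix (Fin 2) (Fin 2) ℂ)
    (hj : j = Matrix.of ![![(-1 : ℂ), 0], ![0, 1]])
    (hR : R = (1/2 : ℂ) • Matrix.of
      ![![2 - ψ * (starRingEnd ℂ) ψ, -((starRingEnd ℂ) ψ)^2],
        ![ψ^2, 2 + ψ * (starRingEnd ℂ) ψ]])
    (F₁ : Matrix (Fin 1) (Fin 2) ℂ)
    (hF₁ : F₁ = Matrix.of ![![ψ, (starRingEnd ℂ) ψ]]) :
    R - R⁻¹ = j * (F₁ᴴ * F₁) ∧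
      R⁻¹ = (2 : ℂ) • (1 : Matrix (Fin 2) (Fin 2) ℂ) - R := by
  have hinv : R⁻¹ = (2 : ℂ) • (1 : Matrix (Fin 2) (Fin 2) ℂ) - R := by
    apply Matrix.inv_eq_right_inv
    subst hR
    ext i k
    fin_cases i <;> fin_cases k <;>
      simp [Matrix.mul_apply, Fin.sum_univ_succ, Matrix.one_apply] <;> ring
  refine ⟨?_, hinv⟩
  rw [hinv]
  subst hR hj hF₁
  ext i k
  fin_cases i <;> fin_cases k <;>
    simp [Matrix.mul_apply, Fin.sum_univ_succ, Matrix.one_apply, conjTranspose_apply] <;> ring
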